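/- Let (g_{l,k} : l ≥ 1, 0 ≤ k < 2^l) be a family of independent standard normal N(0,1) random variables on a probability space. Then the random variable sup_{l ≥ 1} l^{-1/2} · max_{0 ≤ k < 2^l} |g_{l,k}| has finite expectation. -/

import Mathlib

open MeasureTheory ProbabilityTheory Real
open scoped ENNReal NNReal

/-- The exponential moment of a standard Gaussian. -/
lemma lintegral_exp_gaussianReal (c : ℝ) :
    ∫⁻ x, ENNReal.ofReal (rexp (c * x)) ∂(gaussianReal 0 1)
      = ENNReal.ofReal (rexp (c ^ 2 / 2)) := by
  have hm : Measurable fun x : ℝ => ENNReal.ofReal (rexp (c * x)) :=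
    Measurable.ennreal_ofReal (Real.measurable_exp.comp (measurable_const.mul measurable_id'))
  rw [gaussianReal_of_var_ne_zero 0 one_ne_zero,
    lintegral_withDensity_eq_lintegral_mul _ (measurable_gaussianPDF 0 1) hm]
  have hkey : ∀ x : ℝ, (gaussianPDF 0 1 * fun x => ENNReal.ofReal (rexp (c * x))) x
      = ENNReal.ofReal (rexp (c ^ 2 / 2)) * gaussianPDF c 1 x := by
    intro x
    simp only [Pi.mul_apply, gaussianPDF]
    rw [← ENNReal.ofReal_mul (gaussianPDFReal_nonneg 0 1 x),
      ← ENNReal.ofReal_mul (le_of_lt (exp_pos _))]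
    congr 1
    simp only [gaussianPDFReal, NNReal.coe_one, mul_one, sub_zero]
    rw [mul_assoc, ← Real.exp_add, mul_comm (rexp (c ^ 2 / 2)) _, mul_assoc, ← Real.exp_add]
    congr 1
    ring
  simp_rw [hkey]
  rw [lintegral_const_mul _ (measurable_gaussianPDF c 1),
    lintegral_gaussianPDF_eq_one c one_ne_zero, mul_one]

/-- The key per-level estimate: the positive part of `|x|/√l - 2` under a standard
Gaussian is at most `exp (-2 l)`. -/
lemma gaussian_excess_bound (l : ℕ) (hl : 1 ≤ l) :
    ∫⁻ x, ENNReal.ofReal (|x| / Real.sqrt l - 2) ∂(gaussianReal 0 1)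
      ≤ ENNReal.ofReal (rexp (-(2 * l))) := by
  set c : ℝ := 2 * Real.sqrt l with hc
  have hl1 : (1 : ℝ) ≤ Real.sqrt l := by
    rw [show (1:ℝ) = Real.sqrt 1 by simp]
    exact Real.sqrt_le_sqrt (by exact_mod_cast hl)
  have hsl : (0:ℝ) < Real.sqrt l := lt_of_lt_of_le one_pos hl1
  have hcpos : (0:ℝ) < c := by positivity
  have hcsq : c ^ 2 = 4 * l := by
    rw [hc, mul_pow, Real.sq_sqrt (by positivity : (0:ℝ) ≤ (l:ℝ))]
    ring
  -- pointwise bound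
  have hpt : ∀ x : ℝ, |x| / Real.sqrt l - 2
      ≤ rexp (-c ^ 2) / c * (rexp (c * x) + rexp (c * (-x))) := by
    intro x
    have hRnn : 0 ≤ rexp (-c ^ 2) / c * (rexp (c * x) + rexp (c * (-x))) := by positivity
    rcases le_or_gt (|x|) c with h | h
    · have : |x| / Real.sqrt l - 2 ≤ 0 := by
        rw [sub_nonpos, div_le_iff₀ hsl]
        calc |x| ≤ c := h
        _ = 2 * Real.sqrt l := rfl
      linarith
    · have h1 : |x| / Real.sqrt l - 2 = (|x| - c) / Real.sqrt l := by
        field_simp [hc]; ring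
      have h2 : (|x| - c) / Real.sqrt l ≤ |x| - c :=
        div_le_self (by linarith) hl1
      have h3 : |x| - c ≤ rexp (c * (|x| - c)) / c := by
        rw [le_div_iff₀ hcpos]
        have := Real.add_one_le_exp (c * (|x| - c))
        nlinarith [mul_pos hcpos (sub_pos.mpr h)]
      have h4 : rexp (c * (|x| - c)) / c ≤ rexp (-c ^ 2) / c * (rexp (c * x) + rexp (c * (-x))) := by
        have hexp : rexp (c * (|x| - c)) = rexp (-c ^ 2) * rexp (c * |x|) := by
          rw [← Real.exp_add]; ring_nf
        rw [hexp]
        have h5 : rexp (c * |x|) ≤ rexp (c * x) + rexp (c * (-x)) := by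
          rcases abs_cases x with ⟨hx, _⟩ | ⟨hx, _⟩
          · rw [hx]; nlinarith [exp_pos (c * (-x))]
          · rw [hx]; nlinarith [exp_pos (c * x)]
        rw [div_mul_eq_mul_div, mul_div_assoc, mul_div_assoc]
        exact mul_le_mul_of_nonneg_left (div_le_div_of_nonneg_right h5 hcpos.le)
          (le_of_lt (exp_pos _))
      rw [h1]
      linarith
  have hmono : ∫⁻ x, ENNReal.ofReal (|x| / Real.sqrt l - 2) ∂(gaussianReal 0 1)
      ≤ ∫⁻ x, ENNReal.ofReal (rexp (-c ^ 2) / c * (rexp (c * x) + rexp (c * (-x))))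
          ∂(gaussianReal 0 1) :=
    lintegral_mono fun x => ENNReal.ofReal_le_ofReal (hpt x)
  refine hmono.trans ?_
  have hsplit : ∀ x : ℝ,
      ENNReal.ofReal (rexp (-c ^ 2) / c * (rexp (c * x) + rexp (c * (-x))))
        = ENNReal.ofReal (rexp (-c ^ 2) / c)
          * (ENNReal.ofReal (rexp (c * x)) + ENNReal.ofReal (rexp ((-c) * x))) := by
    intro x
    rw [ENNReal.ofReal_mul (by positivity), ENNReal.ofReal_add (le_of_lt (exp_pos _))
      (le_of_lt (exp_pos _))]
    congr 3
    ring
  simp_rw [hsplit]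
  have hm1 : Measurable fun x : ℝ => ENNReal.ofReal (rexp (c * x)) :=
    Measurable.ennreal_ofReal (Real.measurable_exp.comp (measurable_const.mul measurable_id'))
  have hm2 : Measurable fun x : ℝ => ENNReal.ofReal (rexp (-c * x)) :=
    Measurable.ennreal_ofReal (Real.measurable_exp.comp (measurable_const.mul measurable_id'))
  rw [lintegral_const_mul _ (show Measurable fun x : ℝ => ENNReal.ofReal (rexp (c * x)) + ENNReal.ofReal (rexp (-c * x)) from hm1.add hm2),
    lintegral_add_left hm1,
    lintegral_exp_gaussianReal c, lintegral_exp_gaussianReal (-c)]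
  have hnegsq : (-c) ^ 2 = c ^ 2 := by ring
  rw [hnegsq, ← two_mul, show ((2:ℝ≥0∞)) = ENNReal.ofReal (2:ℝ) from (ENNReal.ofReal_ofNat 2).symm,
    ← ENNReal.ofReal_mul (by norm_num : (0:ℝ) ≤ 2),
    ← ENNReal.ofReal_mul (by positivity)]
  apply ENNReal.ofReal_le_ofReal
  have hval : rexp (-c ^ 2) / c * (2 * rexp (c ^ 2 / 2)) = 2 / c * rexp (-(c ^ 2 / 2)) := by
    have hee : rexp (c ^ 2 / 2) * rexp (c ^ 2 / 2) = rexp (c ^ 2) := by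
      rw [← Real.exp_add]; ring_nf
    rw [show rexp (-c ^ 2) / c * (2 * rexp (c ^ 2 / 2)) = 2 / c * (rexp (-c ^ 2) * rexp (c ^ 2 / 2)) by ring,
      ← Real.exp_add]
    congr 2
    ring
  rw [hval, hcsq]
  have h2c : 2 / c ≤ 1 := by
    rw [div_le_one hcpos, hc]
    linarith
  calc 2 / c * rexp (-(4 * l / 2)) ≤ 1 * rexp (-(4 * l / 2)) :=
        mul_le_mul_of_nonneg_right h2c (le_of_lt (exp_pos _))
  _ = rexp (-(2 * l)) := by rw [one_mul]; congr 1; ring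

/-- For a family `(g l k : l ≥ 1, 0 ≤ k < 2^l)` of jointly independent
standard normal random variables, the random variable
`sup_{l ≥ 1} l^{-1/2} · max_{0 ≤ k < 2^l} |g l k|` has finite expectation. -/
theorem multiscale_sup_finite_expectation
    {Ω : Type*} [MeasurableSpace Ω] (P : Measure Ω) [IsProbabilityMeasure P]
    (g : ℕ → ℕ → Ω → ℝ)
    (hmeas : ∀ l k, Measurable (g l k))
    (hgauss : ∀ l k, 1 ≤ l → k < 2 ^ l → Measure.map (g l k) P = gaussianReal 0 1)
    (hindep : iIndepFun
      (fun p : {q : ℕ × ℕ // 1 ≤ q.1 ∧ q.2 < 2 ^ q.1} => g p.1.1 p.1.2) P) :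
    ∫⁻ ω, ⨆ (l : ℕ) (_ : 1 ≤ l) (k : ℕ) (_ : k < 2 ^ l),
        ENNReal.ofReal (|g l k ω| / Real.sqrt l) ∂P < ⊤ := by
  classical
  set S : Set (ℕ × ℕ) := {q : ℕ × ℕ | 1 ≤ q.1 ∧ q.2 < 2 ^ q.1} with hS
  -- pointwise bound of the sup by 2 plus a sum of excesses
  have hpt : ∀ ω : Ω,
      (⨆ (l : ℕ) (_ : 1 ≤ l) (k : ℕ) (_ : k < 2 ^ l),
          ENNReal.ofReal (|g l k ω| / Real.sqrt l))
        ≤ ENNReal.ofReal 2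
          + ∑' p : S, ENNReal.ofReal (|g p.1.1 p.1.2 ω| / Real.sqrt p.1.1 - 2) := by
    intro ω
    refine iSup_le fun l => iSup_le fun hl => iSup_le fun k => iSup_le fun hk => ?_
    have h1 : ENNReal.ofReal (|g l k ω| / Real.sqrt l)
        ≤ ENNReal.ofReal 2 + ENNReal.ofReal (|g l k ω| / Real.sqrt l - 2) := by
      rcases le_total (|g l k ω| / Real.sqrt l) 2 with h | h
      · exact le_add_right (ENNReal.ofReal_le_ofReal h)
      · rw [← ENNReal.ofReal_add (by norm_num) (by linarith)]
        apply ENNReal.ofReal_le_ofReal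
        linarith
    refine h1.trans (add_le_add le_rfl ?_)
    exact ENNReal.le_tsum (⟨(l, k), hl, hk⟩ : S)
  have hmeas' : ∀ p : S, Measurable fun ω =>
      ENNReal.ofReal (|g p.1.1 p.1.2 ω| / Real.sqrt p.1.1 - 2) := by
    intro p
    exact ((((hmeas p.1.1 p.1.2).abs.div_const _).sub_const _)).ennreal_ofReal
  calc ∫⁻ ω, ⨆ (l : ℕ) (_ : 1 ≤ l) (k : ℕ) (_ : k < 2 ^ l),
        ENNReal.ofReal (|g l k ω| / Real.sqrt l) ∂P
      ≤ ∫⁻ ω, (ENNReal.ofReal 2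
          + ∑' p : S, ENNReal.ofReal (|g p.1.1 p.1.2 ω| / Real.sqrt p.1.1 - 2)) ∂P :=
        lintegral_mono hpt
    _ = ENNReal.ofReal 2
          + ∑' p : S, ∫⁻ ω, ENNReal.ofReal (|g p.1.1 p.1.2 ω| / Real.sqrt p.1.1 - 2) ∂P := by
        rw [lintegral_add_left measurable_const, lintegral_const, measure_univ, mul_one,
          lintegral_tsum fun p => (hmeas' p).aemeasurable]
    _ ≤ ENNReal.ofReal 2 + ∑' p : S, ENNReal.ofReal (rexp (-(2 * (p.1.1 : ℝ)))) := by
        refine add_le_add le_rfl (ENNReal.tsum_le_tsum fun p => ?_)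
        obtain ⟨⟨l, k⟩, hl, hk⟩ := p
        have hmap : ∫⁻ ω, ENNReal.ofReal (|g l k ω| / Real.sqrt l - 2) ∂P
            = ∫⁻ x, ENNReal.ofReal (|x| / Real.sqrt l - 2) ∂(gaussianReal 0 1) := by
          have hm3 : Measurable fun x : ℝ => ENNReal.ofReal (|x| / Real.sqrt l - 2) :=
            Measurable.ennreal_ofReal (((measurable_id'.abs).div_const _).sub_const 2)
          rw [← hgauss l k hl hk, lintegral_map hm3 (hmeas l k)]
        rw [hmap]
        exact gaussian_excess_bound l hl
    _ < ⊤ := by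
        rw [ENNReal.add_lt_top]
        refine ⟨ENNReal.ofReal_lt_top, lt_of_le_of_lt
          (b := ∑' l : ℕ, (2 : ℝ≥0∞) ^ l * ENNReal.ofReal (rexp (-(2 * (l : ℝ))))) ?_ ?_⟩
        · -- bound tsum over the subtype by a double sum
          rw [tsum_subtype S (fun q : ℕ × ℕ => ENNReal.ofReal (rexp (-(2 * (q.1 : ℝ)))))]
          have hq : ∀ q : ℕ × ℕ,
              S.indicator (fun q : ℕ × ℕ => ENNReal.ofReal (rexp (-(2 * (q.1 : ℝ))))) q
              ≤ (fun (l k : ℕ) => (↑(Finset.range (2 ^ l)) : Set ℕ).indicator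
                  (fun _ => ENNReal.ofReal (rexp (-(2 * (l : ℝ))))) k) q.1 q.2 := by
            rintro ⟨l, k⟩
            by_cases hk : (l, k) ∈ S
            · rw [Set.indicator_of_mem hk]
              simp only
              rw [Set.indicator_of_mem (by simpa using hk.2)]
            · rw [Set.indicator_of_notMem hk]
              exact zero_le
          refine le_trans (ENNReal.tsum_le_tsum hq) ?_
          rw [ENNReal.tsum_prod (f := fun (l k : ℕ) => (↑(Finset.range (2 ^ l)) : Set ℕ).indicator
            (fun _ => ENNReal.ofReal (rexp (-(2 * (l : ℝ))))) k)]
          refine ENNReal.tsum_le_tsum fun l => ?_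
          calc ∑' k : ℕ, (↑(Finset.range (2 ^ l)) : Set ℕ).indicator
                  (fun _ => ENNReal.ofReal (rexp (-(2 * (l : ℝ))))) k
              = ∑ k ∈ Finset.range (2 ^ l), ENNReal.ofReal (rexp (-(2 * (l : ℝ)))) := by
                rw [tsum_eq_sum (s := Finset.range (2 ^ l))
                  (fun b hb => Set.indicator_of_notMem (by simpa using hb) _)]
                exact Finset.sum_congr rfl fun b hb =>
                  Set.indicator_of_mem (by simpa using hb) _
            _ = (2 : ℝ≥0∞) ^ l * ENNReal.ofReal (rexp (-(2 * (l : ℝ)))) := by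
                rw [Finset.sum_const, Finset.card_range, nsmul_eq_mul]
                norm_num
            _ ≤ (2 : ℝ≥0∞) ^ l * ENNReal.ofReal (rexp (-(2 * (l : ℝ)))) := le_rfl
        · -- geometric series
          have hterm : ∀ l : ℕ, (2 : ℝ≥0∞) ^ l * ENNReal.ofReal (rexp (-(2 * (l : ℝ))))
              = ((2 : ℝ≥0∞) * ENNReal.ofReal (rexp (-2))) ^ l := by
            intro l
            rw [mul_pow]
            congr 1
            rw [← ENNReal.ofReal_pow (le_of_lt (exp_pos _)), ← Real.exp_nat_mul]
            congr 1
            ring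
          simp_rw [hterm]
          rw [ENNReal.tsum_geometric]
          refine ENNReal.inv_lt_top.mpr ?_
          rw [tsub_pos_iff_lt]
          have hlt : ENNReal.ofReal (rexp (-2)) < ENNReal.ofReal (1 / 2) := by
            apply (ENNReal.ofReal_lt_ofReal_iff (by norm_num)).mpr
            rw [Real.exp_neg]
            rw [inv_lt_comm₀ (exp_pos 2) (by norm_num)]
            have := Real.add_one_lt_exp (by norm_num : (2:ℝ) ≠ 0)
            norm_num at this ⊢
            linarith
          calc (2 : ℝ≥0∞) * ENNReal.ofReal (rexp (-2))
              < 2 * ENNReal.ofReal (1 / 2) :=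
                ENNReal.mul_lt_mul_iff_right (by norm_num) (by norm_num) |>.mpr hlt
            _ = 1 := by
                rw [ENNReal.ofReal_div_of_pos (by norm_num)]
                norm_num
                rw [ENNReal.mul_inv_cancel (by norm_num) (by norm_num)]
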